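/- If W̃ is a Darboux transformation of W with factoring operators V and N, then the block operator (0 V; N 0) belongs to the algebra D(W ⊕ W̃). -/

import Mathlib

open Polynomial Matrix MeasureTheory
open scoped ComplexOrder

/-- Matrix polynomials: square matrices with polynomial entries. -/
abbrev MatP (n : Type*) := Matrix n n (Polynomial ℂ)

section MatFramework
variable {n : Type*} [Fintype n] [DecidableEq n]

/-- Entrywise `j`-th derivative of a matrix polynomial. -/
noncomputable def derivIter (j : ℕ) (P : MatP n) : MatP n :=
  P.map (fun p => Polynomial.derivative^[j] p)

/-- Right action of the differential operator `∑_j ∂^j F j` on a matrix polynomial: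
`P · D = ∑_j P^{(j)} F_j`. -/
noncomputable def actOp (F : ℕ →₀ MatP n) (P : MatP n) : MatP n :=
  F.sum fun j Fj => derivIter j P * Fj

/-- A map on matrix polynomials is a matrix differential operator with polynomial
coefficients if it is given by some `∑_j ∂^j F_j`. -/
def IsDiffOp (L : MatP n → MatP n) : Prop :=
  ∃ F : ℕ →₀ MatP n, ∀ P, L P = actOp F P

/-- Degree of a matrix polynomial: the sup of the degrees of its entries. -/
noncomputable def matDeg (P : MatP n) : WithBot ℕ :=
  Finset.univ.sup fun ij : n × n => (P ij.1 ij.2).degree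

/-- A differential operator is degree-preserving if `deg (P · V) = deg P` for all `P`. -/
def DegPres (L : MatP n → MatP n) : Prop :=
  IsDiffOp L ∧ ∀ P, matDeg (L P) = matDeg P

/-- Natural-number degree of a matrix polynomial. -/
noncomputable def matNatDeg (P : MatP n) : ℕ :=
  Finset.univ.sup fun ij : n × n => (P ij.1 ij.2).natDegree

/-- Leading coefficient of a matrix polynomial. -/
noncomputable def matLead (P : MatP n) : Matrix n n ℂ :=
  Matrix.of fun i j => (P i j).coeff (matNatDeg P)

/-- Evaluation of a matrix polynomial at a real point. -/
noncomputable def evalMP (P : MatP n) (x : ℝ) : Matrix n n ℂ :=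
  Matrix.of fun i j => (P i j).eval (x : ℂ)

/-- The matrix-valued inner product `⟨P,Q⟩ = ∫_S P(x) W(x) Q(x)^* dx`. -/
noncomputable def wInner (S : Set ℝ) (W : ℝ → Matrix n n ℂ) (P Q : MatP n) :
    Matrix n n ℂ :=
  Matrix.of fun i j => ∫ x in S, (evalMP P x * W x * (evalMP Q x)ᴴ) i j

/-- `W` is a weight matrix supported on `S`: positive definite on `S` with finite moments. -/
def IsWeight (S : Set ℝ) (W : ℝ → Matrix n n ℂ) : Prop :=
  MeasurableSet S ∧ volume S ≠ 0 ∧ (∀ x ∈ S, (W x).PosDef) ∧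
  ∀ (k : ℕ) (i j : n), IntegrableOn (fun x => ‖W x i j‖ * |x| ^ k) S

/-- `P` is the sequence of monic orthogonal matrix polynomials for the weight `W` on `S`. -/
def MonicOPS (S : Set ℝ) (W : ℝ → Matrix n n ℂ) (P : ℕ → MatP n) : Prop :=
  (∀ k, matNatDeg (P k) = k) ∧
  (∀ k, (Matrix.of fun i j => ((P k) i j).coeff k) = (1 : Matrix n n ℂ)) ∧
  (∀ k l, k ≠ l → wInner S W (P k) (P l) = 0)

/-- Membership in the algebra `D(W)`: a differential operator having the (monic orthogonal)
polynomials `P_k` as eigenfunctions with matrix eigenvalues. -/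
def InDW (P : ℕ → MatP n) (L : MatP n → MatP n) : Prop :=
  IsDiffOp L ∧ ∀ k, ∃ Λ : Matrix n n ℂ, L (P k) = Λ.map Polynomial.C * P k

/-- `Pt` (the monic OPS of `W̃`) is obtained from `P` (the monic OPS of `W`) by a Darboux
transformation: some `D = V N ∈ D(W)` with `V, N` degree-preserving and
`P_k · V = A_k P̃_k`, `A_k` nonsingular. -/
def IsDarbouxPair (P Pt : ℕ → MatP n) : Prop :=
  ∃ V Nd : MatP n → MatP n, DegPres V ∧ DegPres Nd ∧
    InDW P (fun Q => Nd (V Q)) ∧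
    ∀ k, ∃ A : Matrix n n ℂ, IsUnit A ∧ V (P k) = A.map Polynomial.C * Pt k

end MatFramework

/-- The off-diagonal block operator `(0 V; N 0)` built from the coefficients of `V` and `N`. -/
noncomputable def offBlocks {n : Type*} [Fintype n] [DecidableEq n]
    (F G : ℕ →₀ MatP n) : ℕ →₀ MatP (n ⊕ n) :=
  F.mapRange (fun A => Matrix.fromBlocks 0 A 0 0) (by simp) +
  G.mapRange (fun A => Matrix.fromBlocks 0 0 A 0) (by simp)


section Aux
variable {n : Type*} [Fintype n] [DecidableEq n]

lemma derivIter_fromBlocks (j : ℕ) (P Q : MatP n) :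
    derivIter j (Matrix.fromBlocks P 0 0 Q) =
      Matrix.fromBlocks (derivIter j P) 0 0 (derivIter j Q) := by
  unfold derivIter
  rw [Matrix.fromBlocks_map]
  congr 1 <;> ext i k <;>
    simp [Matrix.map_apply, Polynomial.iterate_derivative_zero]

lemma sum_fromBlocks_b {ι : Type*} (s : Finset ι) (b : ι → MatP n) :
    ∑ i ∈ s, Matrix.fromBlocks 0 (b i) 0 0 =
      Matrix.fromBlocks 0 (∑ i ∈ s, b i) (0 : MatP n) 0 := by
  classical
  induction s using Finset.induction with
  | empty => simp [Matrix.fromBlocks_zero]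
  | insert _ _ h ih => simp [Finset.sum_insert h, ih, Matrix.fromBlocks_add]

lemma sum_fromBlocks_c {ι : Type*} (s : Finset ι) (c : ι → MatP n) :
    ∑ i ∈ s, Matrix.fromBlocks 0 0 (c i) 0 =
      Matrix.fromBlocks 0 (0 : MatP n) (∑ i ∈ s, c i) 0 := by
  classical
  induction s using Finset.induction with
  | empty => simp [Matrix.fromBlocks_zero]
  | insert _ _ h ih => simp [Finset.sum_insert h, ih, Matrix.fromBlocks_add]

lemma actOp_fromBlocks (F G : ℕ →₀ MatP n) (P Q : MatP n) :
    actOp (offBlocks F G) (Matrix.fromBlocks P 0 0 Q) =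
      Matrix.fromBlocks 0 (actOp F P) (actOp G Q) 0 := by
  unfold actOp offBlocks
  rw [Finsupp.sum_add_index' (by intro i; simp) (by intro i a b; rw [mul_add])]
  rw [Finsupp.sum_mapRange_index (by intro i; simp),
      Finsupp.sum_mapRange_index (by intro i; simp)]
  have h1 : ∀ j (Fj : MatP n),
      derivIter j (Matrix.fromBlocks P 0 0 Q) * Matrix.fromBlocks 0 Fj 0 0 =
        Matrix.fromBlocks 0 (derivIter j P * Fj) 0 0 := by
    intro j Fj
    rw [derivIter_fromBlocks, Matrix.fromBlocks_multiply]
    simp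
  have h2 : ∀ j (Gj : MatP n),
      derivIter j (Matrix.fromBlocks P 0 0 Q) * Matrix.fromBlocks 0 0 Gj 0 =
        Matrix.fromBlocks 0 0 (derivIter j Q * Gj) 0 := by
    intro j Gj
    rw [derivIter_fromBlocks, Matrix.fromBlocks_multiply]
    simp
  rw [Finsupp.sum, Finsupp.sum, Finsupp.sum, Finsupp.sum]
  simp only [h1, h2]
  rw [sum_fromBlocks_b, sum_fromBlocks_c]
  rw [Matrix.fromBlocks_add]
  simp

lemma derivIter_constMul (j : ℕ) (A : Matrix n n ℂ) (Q : MatP n) :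
    derivIter j (A.map Polynomial.C * Q) = A.map Polynomial.C * derivIter j Q := by
  ext i k
  simp only [derivIter, Matrix.map_apply, Matrix.mul_apply]
  have hs := Polynomial.iterate_derivative_sum (R := ℂ) (ι := n) j (Finset.univ : Finset n)
    (fun l => Polynomial.C (A i l) * Q l k)
  rw [hs]
  rw [Finset.sum_congr rfl fun l _ => Polynomial.iterate_derivative_C_mul (A i l) (Q l k) j]

lemma actOp_constMul (F : ℕ →₀ MatP n) (A : Matrix n n ℂ) (Q : MatP n) :
    actOp F (A.map Polynomial.C * Q) = A.map Polynomial.C * actOp F Q := by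
  unfold actOp
  rw [Finsupp.sum, Finsupp.sum, Finset.mul_sum]
  exact Finset.sum_congr rfl fun j _ => by rw [derivIter_constMul, mul_assoc]

end Aux

/-- If `W̃` is a Darboux transformation of `W` with factoring operators
`V` (with coefficients `F`) and `N` (with coefficients `G`), then the block operator
`(0 V; N 0)` belongs to `D(W ⊕ W̃)`, i.e. it has the monic orthogonal polynomials
`diag(P_k, P̃_k)` of `W ⊕ W̃` as eigenfunctions. -/
theorem stmt4 {n : Type*} [Fintype n] [DecidableEq n]
    (S : Set ℝ) (W Wt : ℝ → Matrix n n ℂ)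
    (hW : IsWeight S W) (hWt : IsWeight S Wt)
    (P Pt : ℕ → MatP n) (hP : MonicOPS S W P) (hPt : MonicOPS S Wt Pt)
    (V Nd : MatP n → MatP n) (hV : DegPres V) (hN : DegPres Nd)
    (F G : ℕ →₀ MatP n) (hVF : ∀ Q, V Q = actOp F Q) (hNG : ∀ Q, Nd Q = actOp G Q)
    (hD : InDW P (fun Q => Nd (V Q)))
    (hA : ∀ k, ∃ A : Matrix n n ℂ, IsUnit A ∧ V (P k) = A.map Polynomial.C * Pt k) :
    InDW (fun k => Matrix.fromBlocks (P k) 0 0 (Pt k)) (actOp (offBlocks F G)) := by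
  classical
  refine ⟨⟨offBlocks F G, fun _ => rfl⟩, fun k => ?_⟩
  obtain ⟨A, hAu, hAeq⟩ := hA k
  obtain ⟨_, hΛ⟩ := hD
  obtain ⟨Λ, hΛk⟩ := hΛ k
  set B : Matrix n n ℂ := ↑hAu.unit⁻¹ with hB
  have hBA : B * A = 1 := hAu.val_inv_mul
  have hNdPt : Nd (Pt k) = (B * Λ).map Polynomial.C * P k := by
    have h1 : Nd (A.map Polynomial.C * Pt k) = Λ.map Polynomial.C * P k := by
      rw [← hAeq]; exact hΛk
    rw [hNG, actOp_constMul, ← hNG] at h1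
    have := congrArg (fun M => B.map Polynomial.C * M) h1
    rw [← mul_assoc, ← Matrix.map_mul, hBA] at this
    simpa [Matrix.map_mul, mul_assoc] using this
  refine ⟨Matrix.fromBlocks 0 A (B * Λ) 0, ?_⟩
  rw [actOp_fromBlocks, ← hVF, ← hNG, hAeq, hNdPt]
  have hC0 : (Polynomial.C (0 : ℂ)) = 0 := map_zero _
  rw [Matrix.fromBlocks_map, Matrix.fromBlocks_multiply]
  simp [Matrix.map_zero _ hC0]
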